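/- Let k ≥ 1, let 0 ≤ τ < 1, and let D_1 and P be probability distributions on {1,...,k} with P(i) ≥ (1−τ)·D_1(i) for every i. Apply the granularising algorithm to the probability vector of P (with n := k) to obtain b_1,...,b_{k+1}, and let E be the probability distribution on {1,...,k+1} with E(j) = b_j/(8k). Let S be a finite nonempty set, D̂ a probability distribution on S, F any type, and X, W : {1,...,k} × S → F. Then d_{E × D̂}(g^cat(X), g^cat(W)) ≥ ((1−τ)/2) · d_{D_1 × D̂}(X, W). -/
import Mathlib


/-- Distance between two functions along a distribution `D` on a finite index set:
`d_D(x,y) = ∑_{i : x i ≠ y i} D i`. -/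
noncomputable def dDist {α β : Type*} [Fintype α] (D : α → ℝ) (x y : α → β) : ℝ :=
  letI := Classical.decEq β
  ∑ i, if x i = y i then 0 else D i

/-- The last granularity output by the granularising algorithm: `b_{k+1} = 8k − ∑ᵢ bᵢ`. -/
def lastGrain {k : ℕ} (b : Fin k → ℕ) : ℕ := 8 * k - ∑ i, b i

/-- The `8k`-grained distribution `E` on `{1,...,k+1}` defined by the granularities:
`E(j) = b j / (8k)`. -/
noncomputable def granDist {k : ℕ} (b : Fin k → ℕ) : Fin (k + 1) → ℝ :=
  Fin.snoc (fun i => (b i : ℝ) / (8 * k)) ((lastGrain b : ℝ) / (8 * k))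

/-- `g^cat(X)` agrees with `X` on rows `1,...,k` and its row `k+1` is identically `0`. -/
def gcatZ {k : ℕ} {S F : Type*} [Zero F] (X : Fin k × S → F) : Fin (k + 1) × S → F :=
  fun q => (Fin.snoc (fun i (s : S) => X (i, s)) (fun _ => (0 : F)) : Fin (k + 1) → S → F)
    q.1 q.2

/-- If `P(i) ≥ (1−τ)·D₁(i)` for all `i` and `E` is the granularisation of `P`, then
`d_{E × D̂}(g^cat(X), g^cat(W)) ≥ ((1−τ)/2) · d_{D₁ × D̂}(X, W)`. -/
theorem gcat_granularise_lower_bound {k : ℕ} (hk : 1 ≤ k)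
    (τ : ℝ) (hτ0 : 0 ≤ τ) (hτ1 : τ < 1)
    (D₁ P : Fin k → ℝ)
    (hD₁0 : ∀ i, 0 ≤ D₁ i) (hD₁1 : ∑ i, D₁ i = 1)
    (hP0 : ∀ i, 0 ≤ P i) (hP1 : ∑ i, P i = 1)
    (hPD : ∀ i, (1 - τ) * D₁ i ≤ P i)
    (b : Fin k → ℕ) (hb : ∀ i, b i = ⌊(6 * (k : ℝ)) * P i⌋₊ + 2)
    {S : Type*} [Fintype S] [Nonempty S] {F : Type*} [Zero F]
    (Dhat : S → ℝ) (hDhat0 : ∀ s, 0 ≤ Dhat s) (hDhat1 : ∑ s, Dhat s = 1)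
    (X W : Fin k × S → F) :
    ((1 - τ) / 2) * dDist (fun q : Fin k × S => D₁ q.1 * Dhat q.2) X W
      ≤ dDist (fun q : Fin (k + 1) × S => granDist b q.1 * Dhat q.2)
          (gcatZ X) (gcatZ W) := by
  classical
  have hkR : (1:ℝ) ≤ (k:ℝ) := by exact_mod_cast hk
  have h8k : (0:ℝ) < 8 * k := by linarith
  have key : ∀ i, ((1 - τ) / 2) * D₁ i ≤ (b i : ℝ) / (8 * k) := by
    intro i
    have h1 : (6 * (k:ℝ)) * P i ≤ (b i : ℝ) := by
      rw [hb i]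
      push_cast
      have := Nat.lt_floor_add_one ((6 * (k:ℝ)) * P i)
      linarith
    have hP : (1 - τ) * D₁ i ≤ P i := hPD i
    have hD : 0 ≤ (1 - τ) * D₁ i := mul_nonneg (by linarith) (hD₁0 i)
    rw [le_div_iff₀ h8k]
    nlinarith [mul_nonneg hD (le_trans zero_le_one hkR), mul_le_mul_of_nonneg_right hP (le_of_lt (show (0:ℝ) < k by linarith))]
  unfold dDist gcatZ
  rw [Fintype.sum_prod_type, Fintype.sum_prod_type, Finset.mul_sum,
    Fin.sum_univ_castSucc]
  have hlast : ∀ s : S,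
      (if (Fin.snoc (fun i (s : S) => X (i, s)) (fun _ => (0 : F)) :
          Fin (k+1) → S → F) (Fin.last k) s
        = (Fin.snoc (fun i (s : S) => W (i, s)) (fun _ => (0 : F)) :
          Fin (k+1) → S → F) (Fin.last k) s
      then 0 else granDist b (Fin.last k) * Dhat s) = 0 := by
    intro s
    simp [Fin.snoc_last]
  rw [Finset.sum_congr rfl (fun s _ => hlast s), Finset.sum_const, smul_zero, add_zero]
  apply Finset.sum_le_sum
  intro i _
  rw [Finset.mul_sum]
  apply Finset.sum_le_sum
  intro s _
  simp only [Fin.snoc_castSucc, granDist]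
  by_cases h : X (i, s) = W (i, s)
  · simp [h]
  · simp only [h, if_false]
    rw [← mul_assoc]
    exact mul_le_mul_of_nonneg_right (key i) (hDhat0 s)
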